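/- Let F : Ordinal → Ordinal be weakly increasing with F(ζ) < Ω and ζ < F(ζ) for all ζ < Ω. Let α, β be ordinals with α + β < ε(Ω), and assume that every exponent occurring in the base-Ω Cantor normal form of β is strictly smaller than every exponent occurring in the base-Ω Cantor normal form of α (this holds in the paper's application, where α is of the form Ω·α₀ and β < Ω; it guarantees that α + β′ is again in base-Ω normal form for every β′ ≤ β). Then for every ξ < Ω, (F^α)^β(ξ) ≤ F^{α+β}(ξ), where (F^α)^β denotes the hierarchy construction applied to the function F^α. -/

import Mathlib

open Ordinal

set_option linter.deprecated false

/-- The least ordinal `λ` with `Ω ^ λ = λ`. -/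
noncomputable def epsOmega (Ω : Ordinal) : Ordinal := sInf {x : Ordinal | Ω ^ x = x}

/-- The set `K_Ω α` of coefficients of `α`, defined by recursion on `α` via the
base-`Ω` Cantor normal form: `K_Ω α = {β₁,…,β_l} ∪ K_Ω α₁ ∪ ⋯ ∪ K_Ω α_l`. -/
noncomputable def KOmega (Ω : Ordinal) : Ordinal → Set Ordinal :=
  WellFounded.fix Ordinal.lt_wf fun α IH =>
    {β | ∃ p ∈ Ordinal.CNF Ω α, p.2 = β} ∪
    {β | ∃ p ∈ Ordinal.CNF Ω α, ∃ h : p.1 < α, β ∈ IH p.1 h}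

/-- The hierarchy `F^α`: `F^0 ξ = F ξ`, and for `α > 0`, `F^α ξ` is the least `γ` with
`ω^γ = γ`, `K_Ω α ∪ {ξ} < γ`, and `F^β η < γ` for all `η < γ` and `β < α` with `K_Ω β < γ`. -/
noncomputable def Hier (Ω : Ordinal) (F : Ordinal → Ordinal) : Ordinal → Ordinal → Ordinal :=
  WellFounded.fix Ordinal.lt_wf fun α IH =>
    if _ : α = 0 then F
    else fun ξ => sInf {γ : Ordinal | omega0 ^ γ = γ ∧ (∀ x ∈ KOmega Ω α, x < γ) ∧ ξ < γ ∧
      ∀ η < γ, ∀ β, ∀ hβ : β < α, (∀ x ∈ KOmega Ω β, x < γ) → IH β hβ η < γ}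

theorem KOmega_def (Ω α : Ordinal) :
    KOmega Ω α = {β | ∃ p ∈ Ordinal.CNF Ω α, p.2 = β} ∪
      {β | ∃ p ∈ Ordinal.CNF Ω α, ∃ _ : p.1 < α, β ∈ KOmega Ω p.1} := by
  show WellFounded.fix _ _ α = _
  rw [WellFounded.fix_eq]
  rfl

theorem Hier_def (Ω : Ordinal) (F : Ordinal → Ordinal) (α : Ordinal) :
    Hier Ω F α = if _ : α = 0 then F
      else fun ξ => sInf {γ : Ordinal | omega0 ^ γ = γ ∧ (∀ x ∈ KOmega Ω α, x < γ) ∧ ξ < γ ∧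
        ∀ η < γ, ∀ β, ∀ _ : β < α, (∀ x ∈ KOmega Ω β, x < γ) → Hier Ω F β η < γ} := by
  show WellFounded.fix _ _ α = _
  rw [WellFounded.fix_eq]
  rfl

theorem Hier_zero (Ω : Ordinal) (F : Ordinal → Ordinal) : Hier Ω F 0 = F := by
  rw [Hier_def]; exact dif_pos rfl

theorem Hier_ne (Ω : Ordinal) (F : Ordinal → Ordinal) {α : Ordinal} (h : α ≠ 0) (ξ : Ordinal) :
    Hier Ω F α ξ = sInf {γ : Ordinal | omega0 ^ γ = γ ∧ (∀ x ∈ KOmega Ω α, x < γ) ∧ ξ < γ ∧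
      ∀ η < γ, ∀ β, ∀ _ : β < α, (∀ x ∈ KOmega Ω β, x < γ) → Hier Ω F β η < γ} := by
  rw [Hier_def Ω F α, dif_neg h]

theorem KOmega_lt {Ω : Ordinal} (hΩ : 1 < Ω) :
    ∀ α, ∀ x ∈ KOmega Ω α, x < Ω := by
  intro α
  induction α using Ordinal.induction with
  | h α IH =>
    intro x hx
    rw [KOmega_def] at hx
    rcases hx with ⟨p, hp, rfl⟩ | ⟨p, hp, h, hx⟩
    · exact Ordinal.CNF.snd_lt hΩ hp
    · exact IH p.1 h x hx

theorem aux_add_lt {b : Ordinal} (hb : 1 < b) :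
    ∀ α, α ≠ 0 → ∀ β, (∀ p ∈ Ordinal.CNF b α, β < b ^ p.1) →
      α + β < b ^ (Ordinal.log b α + 1) := by
  intro α
  refine Ordinal.CNF.rec b
    (C := fun α => α ≠ 0 → ∀ β, (∀ p ∈ Ordinal.CNF b α, β < b ^ p.1) →
      α + β < b ^ (Ordinal.log b α + 1)) (fun h => absurd rfl h) (fun o ho IH => ?_) α
  intro _ β hβ
  have hb0 : b ≠ 0 := (zero_lt_one.trans hb).ne'
  have hoe : b ^ Ordinal.log b o ≠ 0 := opow_ne_zero _ hb0
  have hdecomp : b ^ Ordinal.log b o * (o / b ^ Ordinal.log b o) + o % b ^ Ordinal.log b o = o :=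
    Ordinal.div_add_mod o (b ^ Ordinal.log b o)
  have hcnf : Ordinal.CNF b o =
      (Ordinal.log b o, o / b ^ Ordinal.log b o) :: Ordinal.CNF b (o % b ^ Ordinal.log b o) :=
    Ordinal.CNF.ne_zero ho
  have hhead : β < b ^ Ordinal.log b o := by
    have := hβ (Ordinal.log b o, o / b ^ Ordinal.log b o)
      (by rw [hcnf]; exact List.mem_cons_self)
    simpa using this
  have hrβ : o % b ^ Ordinal.log b o + β < b ^ Ordinal.log b o := by
    rcases eq_or_ne (o % b ^ Ordinal.log b o) 0 with h0 | h0
    · rw [h0, zero_add]; exact hhead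
    · have hlog : Ordinal.log b (o % b ^ Ordinal.log b o) < Ordinal.log b o :=
        (Ordinal.lt_opow_iff_log_lt hb h0).1 (Ordinal.mod_lt o hoe)
      have h2 := IH h0 β (fun p hp => hβ p (by rw [hcnf]; exact List.mem_cons_of_mem _ hp))
      calc o % b ^ Ordinal.log b o + β
          < b ^ (Ordinal.log b (o % b ^ Ordinal.log b o) + 1) := h2
        _ ≤ b ^ Ordinal.log b o := opow_le_opow_right (zero_lt_one.trans hb)
            (by rw [Ordinal.add_one_eq_succ]; exact Order.succ_le_of_lt hlog)
  have hcb : o / b ^ Ordinal.log b o + 1 ≤ b := by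
    have : o / b ^ Ordinal.log b o < b := Ordinal.div_opow_log_lt o hb
    rwa [Ordinal.add_one_eq_succ, Order.succ_le_iff]
  calc o + β = b ^ Ordinal.log b o * (o / b ^ Ordinal.log b o) +
        (o % b ^ Ordinal.log b o + β) := by rw [← add_assoc, hdecomp]
    _ < b ^ Ordinal.log b o * (o / b ^ Ordinal.log b o) + b ^ Ordinal.log b o :=
        add_lt_add_right hrβ _
    _ = b ^ Ordinal.log b o * (o / b ^ Ordinal.log b o + 1) := by rw [mul_add_one]
    _ ≤ b ^ Ordinal.log b o * b := mul_le_mul_right hcb _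
    _ = b ^ (Ordinal.log b o + 1) := by rw [opow_add, opow_one]

theorem CNF_add {b : Ordinal} (hb : 1 < b) :
    ∀ α β, (∀ p ∈ Ordinal.CNF b α, β < b ^ p.1) →
      Ordinal.CNF b (α + β) = Ordinal.CNF b α ++ Ordinal.CNF b β := by
  intro α
  refine Ordinal.CNF.rec b
    (C := fun α => ∀ β, (∀ p ∈ Ordinal.CNF b α, β < b ^ p.1) →
      Ordinal.CNF b (α + β) = Ordinal.CNF b α ++ Ordinal.CNF b β)
    (fun β _ => by rw [zero_add, Ordinal.CNF.zero_right, List.nil_append]) (fun o ho IH => ?_) α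
  intro β hβ
  have hb0 : b ≠ 0 := (zero_lt_one.trans hb).ne'
  have hoe : b ^ Ordinal.log b o ≠ 0 := opow_ne_zero _ hb0
  have hdecomp : b ^ Ordinal.log b o * (o / b ^ Ordinal.log b o) + o % b ^ Ordinal.log b o = o :=
    Ordinal.div_add_mod o (b ^ Ordinal.log b o)
  have hcnf : Ordinal.CNF b o =
      (Ordinal.log b o, o / b ^ Ordinal.log b o) :: Ordinal.CNF b (o % b ^ Ordinal.log b o) :=
    Ordinal.CNF.ne_zero ho
  have hhead : β < b ^ Ordinal.log b o := by
    have := hβ (Ordinal.log b o, o / b ^ Ordinal.log b o)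
      (by rw [hcnf]; exact List.mem_cons_self)
    simpa using this
  have hrβ : o % b ^ Ordinal.log b o + β < b ^ Ordinal.log b o := by
    rcases eq_or_ne (o % b ^ Ordinal.log b o) 0 with h0 | h0
    · rw [h0, zero_add]; exact hhead
    · have hlog : Ordinal.log b (o % b ^ Ordinal.log b o) < Ordinal.log b o :=
        (Ordinal.lt_opow_iff_log_lt hb h0).1 (Ordinal.mod_lt o hoe)
      have h2 := aux_add_lt hb _ h0 β
        (fun p hp => hβ p (by rw [hcnf]; exact List.mem_cons_of_mem _ hp))
      calc o % b ^ Ordinal.log b o + β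
          < b ^ (Ordinal.log b (o % b ^ Ordinal.log b o) + 1) := h2
        _ ≤ b ^ Ordinal.log b o := opow_le_opow_right (zero_lt_one.trans hb)
            (by rw [Ordinal.add_one_eq_succ]; exact Order.succ_le_of_lt hlog)
  have hsum : o + β = b ^ Ordinal.log b o * (o / b ^ Ordinal.log b o) +
      (o % b ^ Ordinal.log b o + β) := by rw [← add_assoc, hdecomp]
  have hne : o + β ≠ 0 := fun h => ho (by
    have h1 : o ≤ o + β := le_self_add
    rw [h] at h1
    exact nonpos_iff_eq_zero.1 h1)
  have hlog : Ordinal.log b (o + β) = Ordinal.log b o := by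
    apply le_antisymm
    · have h1 : o + β < b ^ (Ordinal.log b o + 1) := aux_add_lt hb o ho β hβ
      have h2 := (Ordinal.lt_opow_iff_log_lt hb hne).1 h1
      rwa [Ordinal.add_one_eq_succ, Order.lt_succ_iff] at h2
    · exact Ordinal.le_log_of_opow_le hb
        (le_trans (Ordinal.opow_log_le_self b ho) (le_self_add))
  have hdiv : (o + β) / b ^ Ordinal.log b o = o / b ^ Ordinal.log b o := by
    rw [hsum, Ordinal.mul_add_div _ hoe, Ordinal.div_eq_zero_of_lt hrβ, add_zero]
  have hmod : (o + β) % b ^ Ordinal.log b o = o % b ^ Ordinal.log b o + β := by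
    rw [Ordinal.mod_def, hdiv, hsum, Ordinal.add_sub_cancel]
  have hIH := IH β (fun p hp => hβ p (by rw [hcnf]; exact List.mem_cons_of_mem _ hp))
  rw [Ordinal.CNF.ne_zero hne, hlog, hdiv, hmod, hIH, hcnf, List.cons_append]

theorem KOmega_subset_left {Ω α β : Ordinal}
    (h : Ordinal.CNF Ω (α + β) = Ordinal.CNF Ω α ++ Ordinal.CNF Ω β) :
    KOmega Ω α ⊆ KOmega Ω (α + β) := by
  intro x hx
  rw [KOmega_def] at hx ⊢
  rcases hx with ⟨p, hp, hpx⟩ | ⟨p, hp, hpα, hpx⟩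
  · exact Or.inl ⟨p, by rw [h]; exact List.mem_append_left _ hp, hpx⟩
  · exact Or.inr ⟨p, by rw [h]; exact List.mem_append_left _ hp,
      hpα.trans_le (le_self_add), hpx⟩

theorem KOmega_subset_right {Ω α β : Ordinal}
    (h : Ordinal.CNF Ω (α + β) = Ordinal.CNF Ω α ++ Ordinal.CNF Ω β) :
    KOmega Ω β ⊆ KOmega Ω (α + β) := by
  intro x hx
  rw [KOmega_def] at hx ⊢
  rcases hx with ⟨p, hp, hpx⟩ | ⟨p, hp, hpβ, hpx⟩
  · exact Or.inl ⟨p, by rw [h]; exact List.mem_append_right _ hp, hpx⟩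
  · exact Or.inr ⟨p, by rw [h]; exact List.mem_append_right _ hp,
      hpβ.trans_le (le_add_self), hpx⟩

theorem KOmega_add_subset {Ω α β : Ordinal}
    (h : Ordinal.CNF Ω (α + β) = Ordinal.CNF Ω α ++ Ordinal.CNF Ω β)
    (hα : ∀ p ∈ Ordinal.CNF Ω α, p.1 < α) (hβ : ∀ p ∈ Ordinal.CNF Ω β, p.1 < β) :
    KOmega Ω (α + β) ⊆ KOmega Ω α ∪ KOmega Ω β := by
  intro x hx
  rw [KOmega_def] at hx
  rcases hx with ⟨p, hp, hpx⟩ | ⟨p, hp, _, hpx⟩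
  · rw [h] at hp
    rcases List.mem_append.1 hp with hp | hp
    · exact Or.inl (by rw [KOmega_def]; exact Or.inl ⟨p, hp, hpx⟩)
    · exact Or.inr (by rw [KOmega_def]; exact Or.inl ⟨p, hp, hpx⟩)
  · rw [h] at hp
    rcases List.mem_append.1 hp with hp | hp
    · exact Or.inl (by rw [KOmega_def]; exact Or.inr ⟨p, hp, hα p hp, hpx⟩)
    · exact Or.inr (by rw [KOmega_def]; exact Or.inr ⟨p, hp, hβ p hp, hpx⟩)

theorem CNF_fst_lt_self {Ω x : Ordinal} (hΩ : 1 < Ω) (hx : x < epsOmega Ω) :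
    ∀ p ∈ Ordinal.CNF Ω x, p.1 < x := by
  intro p hp
  have hx0 : x ≠ 0 := by rintro rfl; simp [Ordinal.CNF.zero_right] at hp
  have hlog : Ordinal.log Ω x < x := by
    rcases lt_or_eq_of_le (Ordinal.log_le_self Ω x) with h | h
    · exact h
    · exfalso
      have h1 := Ordinal.opow_log_le_self Ω hx0
      rw [h] at h1
      have h2 : x ≤ Ω ^ x := Ordinal.right_le_opow x hΩ
      have h3 : Ω ^ x = x := le_antisymm h1 h2
      exact absurd hx (not_lt.2 (csInf_le (OrderBot.bddBelow _) h3))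
  exact lt_of_le_of_lt (Ordinal.CNF.fst_le_log hp) hlog

universe u

theorem hier_nonempty (Ω : Ordinal.{u}) (hΩ : 1 < Ω) (F : Ordinal.{u} → Ordinal.{u}) (D ξ : Ordinal.{u}) :
    Set.Nonempty {γ : Ordinal | omega0 ^ γ = γ ∧ (∀ x ∈ KOmega Ω D, x < γ) ∧ ξ < γ ∧
      ∀ η < γ, ∀ β, ∀ _ : β < D, (∀ x ∈ KOmega Ω β, x < γ) → Hier Ω F β η < γ} := by
  classical
  set B : Ordinal → Ordinal := fun x =>
    Ordinal.bsup.{u,u} D (fun δ _ => Ordinal.bsup.{u,u} x (fun η _ => Hier Ω F δ η)) with hB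
  set φ : Ordinal → Ordinal := fun x => nfp (fun y => omega0 ^ y) (max x (B x) + 1) with hφ
  have hωnorm : Order.IsNormal (fun y : Ordinal => omega0 ^ y) := isNormal_opow one_lt_omega0
  have hφ_lt : ∀ x, x < φ x := fun x =>
    lt_of_lt_of_le (lt_of_le_of_lt (le_max_left x (B x))
      (by rw [Ordinal.add_one_eq_succ]; exact Order.lt_succ _)) (Ordinal.le_nfp _ _)
  have hφ_B : ∀ x, B x < φ x := fun x =>
    lt_of_lt_of_le (lt_of_le_of_lt (le_max_right x (B x))
      (by rw [Ordinal.add_one_eq_succ]; exact Order.lt_succ _)) (Ordinal.le_nfp _ _)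
  have hφ_fix : ∀ x, omega0 ^ (φ x) = φ x := fun x => Ordinal.nfp_fp hωnorm _
  set x₀ : Ordinal := max Ω (ξ + 1) with hx₀
  set γ : Ordinal := nfp φ x₀ with hγ
  have hiter : ∀ n : ℕ, φ^[n] x₀ ≤ γ := fun n => Ordinal.iterate_le_nfp φ x₀ n
  have hx₀γ : x₀ ≤ γ := Ordinal.le_nfp φ x₀
  have hmono_iter : ∀ n : ℕ, φ^[n] x₀ ≤ φ^[n + 1] x₀ := by
    intro n; rw [Function.iterate_succ_apply']; exact (hφ_lt _).le
  refine ⟨γ, ?_, ?_, ?_, ?_⟩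
  · have hγsup : γ = ⨆ n : ℕ, φ^[n] x₀ := (Ordinal.iSup_iterate_eq_nfp φ x₀).symm
    apply le_antisymm
    · rw [hγsup, hωnorm.map_iSup bddAbove_of_small]
      apply Ordinal.iSup_le
      intro n
      calc omega0 ^ φ^[n] x₀ ≤ omega0 ^ φ^[n + 1] x₀ :=
            opow_le_opow_right omega0_pos (hmono_iter n)
        _ = φ^[n + 1] x₀ := by rw [Function.iterate_succ_apply']; exact hφ_fix _
        _ ≤ ⨆ n : ℕ, φ^[n] x₀ := Ordinal.le_iSup _ _
    · exact Ordinal.right_le_opow γ one_lt_omega0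
  · intro x hx
    exact lt_of_lt_of_le (KOmega_lt hΩ D x hx) (le_trans (le_max_left _ _) hx₀γ)
  · refine lt_of_lt_of_le ?_ (le_trans (le_max_right _ _) hx₀γ)
    rw [Ordinal.add_one_eq_succ]; exact Order.lt_succ _
  · intro η hη β hβ _
    rw [hγ, Ordinal.lt_nfp_iff] at hη
    obtain ⟨n, hn⟩ := hη
    have h1 : Hier Ω F β η ≤ B (φ^[n] x₀) :=
      le_trans (Ordinal.le_bsup (fun η' _ => Hier Ω F β η') η hn)
        (Ordinal.le_bsup _ β hβ)
    refine lt_of_le_of_lt h1 (lt_of_lt_of_le (hφ_B _) ?_)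
    rw [← Function.iterate_succ_apply' φ n x₀]
    exact hiter (n + 1)

theorem hier_le (Ω : Ordinal) (hΩ : 1 < Ω) (F : Ordinal → Ordinal) :
    ∀ β α, α + β < epsOmega Ω →
      (∀ p ∈ Ordinal.CNF Ω β, ∀ q ∈ Ordinal.CNF Ω α, p.1 < q.1) →
      ∀ ξ, Hier Ω (Hier Ω F α) β ξ ≤ Hier Ω F (α + β) ξ := by
  intro β
  induction β using Ordinal.induction with
  | h β IH =>
    intro α hε hexp ξ
    rcases eq_or_ne β 0 with rfl | hβ0
    · rw [add_zero, Hier_zero]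
    rcases eq_or_ne α 0 with rfl | hα0
    · rw [Hier_zero, zero_add]
    have hεα : α < epsOmega Ω := lt_of_le_of_lt (le_self_add) hε
    have hεβ : β < epsOmega Ω := lt_of_le_of_lt (le_add_self) hε
    have hlogβ : ∀ q ∈ Ordinal.CNF Ω α, Ordinal.log Ω β < q.1 := by
      intro q hq
      exact hexp (Ordinal.log Ω β, β / Ω ^ Ordinal.log Ω β)
        (by rw [Ordinal.CNF.ne_zero hβ0]; exact List.mem_cons_self) q hq
    have hcnfβ : ∀ q ∈ Ordinal.CNF Ω α, β < Ω ^ q.1 := by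
      intro q hq
      calc β < Ω ^ (Ordinal.log Ω β + 1) := by
            rw [Ordinal.add_one_eq_succ]; exact Ordinal.lt_opow_succ_log_self hΩ β
        _ ≤ Ω ^ q.1 := opow_le_opow_right (zero_lt_one.trans hΩ)
            (by rw [Ordinal.add_one_eq_succ]; exact Order.succ_le_of_lt (hlogβ q hq))
    have hconcat : Ordinal.CNF Ω (α + β) = Ordinal.CNF Ω α ++ Ordinal.CNF Ω β :=
      CNF_add hΩ α β hcnfβ
    have hD0 : α + β ≠ 0 := fun h => hα0 (by
      have h1 : α ≤ α + β := le_self_add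
      rw [h] at h1
      exact nonpos_iff_eq_zero.1 h1)
    have hne := hier_nonempty Ω hΩ F (α + β) ξ
    rw [Hier_ne Ω F hD0, Hier_ne Ω (Hier Ω F α) hβ0]
    obtain ⟨h1, h2, h3, h4⟩ := csInf_mem hne
    apply csInf_le (OrderBot.bddBelow _)
    refine ⟨h1, ?_, h3, ?_⟩
    · intro x hx
      exact h2 x (KOmega_subset_right hconcat hx)
    · intro η hη β' hβ' hK
      have hexp' : ∀ p ∈ Ordinal.CNF Ω β', ∀ q ∈ Ordinal.CNF Ω α, p.1 < q.1 := by
        intro p hp q hq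
        calc p.1 ≤ Ordinal.log Ω β' := Ordinal.CNF.fst_le_log hp
          _ ≤ Ordinal.log Ω β := Ordinal.log_mono_right Ω hβ'.le
          _ < q.1 := hlogβ q hq
      have hadd' : α + β' < α + β := by rwa [add_lt_add_iff_left]
      have hε' : α + β' < epsOmega Ω := hadd'.trans hε
      have hIH := IH β' hβ' α hε' hexp' η
      refine lt_of_le_of_lt hIH (h4 η hη (α + β') hadd' ?_)
      intro x hx
      have hcnfβ' : ∀ q ∈ Ordinal.CNF Ω α, β' < Ω ^ q.1 := fun q hq => hβ'.trans (hcnfβ q hq)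
      have hconcat' := CNF_add hΩ α β' hcnfβ'
      have hsub := KOmega_add_subset hconcat' (CNF_fst_lt_self hΩ hεα)
        (CNF_fst_lt_self hΩ (hβ'.trans hεβ))
      rcases hsub hx with hx' | hx'
      · exact h2 x (KOmega_subset_left hconcat hx')
      · exact hK x hx'

/-- For F weakly increasing with F(ζ) < Ω and ζ < F(ζ) for all ζ < Ω, and ordinals
α, β with α + β < ε(Ω) such that every exponent in the base-Ω Cantor normal form of β
is strictly smaller than every exponent in that of α: for every ξ < Ω,
(F^α)^β(ξ) ≤ F^(α+β)(ξ). -/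
theorem stmt5 (Ω : Ordinal) (hΩ : 1 < Ω) (F : Ordinal → Ordinal)
    (hmono : Monotone F) (hF : ∀ ζ < Ω, F ζ < Ω) (hincr : ∀ ζ < Ω, ζ < F ζ)
    (α β : Ordinal) (hαβ : α + β < epsOmega Ω)
    (hexp : ∀ p ∈ Ordinal.CNF Ω β, ∀ q ∈ Ordinal.CNF Ω α, p.1 < q.1) :
    ∀ ξ < Ω, Hier Ω (Hier Ω F α) β ξ ≤ Hier Ω F (α + β) ξ := by
  intro ξ _
  exact hier_le Ω hΩ F β α hαβ hexp ξ
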